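/- Surrogate loss bound for conditional mean embedding: for every measurable map μ : 𝒳 → G with E‖μ(X)‖² < ∞ and every g ∈ G with ‖g‖_G ≤ 1, one has E[ ( E[⟨g, ψ(Y)⟩ | σ(X)] − ⟨g, μ(X)⟩ )² ] ≤ E[ ‖ψ(Y) − μ(X)‖²_G ]. Consequently the natural risk sup_{‖g‖_G ≤ 1} E[(E[⟨g,ψ(Y)⟩|σ(X)] − ⟨g, μ(X)⟩)²] is bounded above by the surrogate risk E‖ψ(Y) − μ(X)‖². -/

import Mathlib

open MeasureTheory

lemma integral_sq_condexp_le' {α : Type*} {m m0 : MeasurableSpace α} {μ : Measure α}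
    [IsFiniteMeasure μ] (hm : m ≤ m0) {f : α → ℝ} (hf : MemLp f 2 μ) :
    ∫ x, (μ[f|m]) x ^ 2 ∂μ ≤ ∫ x, f x ^ 2 ∂μ := by
  haveI : SigmaFinite (μ.trim hm) := inferInstance
  set F : Lp ℝ 2 μ := hf.toLp f with hF
  have hcoeF : F =ᵐ[μ] f := hf.coeFn_toLp
  set cF : Lp ℝ 2 μ := (condExpL2 ℝ ℝ hm F : Lp ℝ 2 μ) with hcF
  have h1 : (cF : α → ℝ) =ᵐ[μ] μ[f|m] := by
    refine ae_eq_condExp_of_forall_setIntegral_eq hm (hf.integrable one_le_two)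
      (fun s _ hμs => integrableOn_Lp_of_measure_ne_top cF (by norm_num) hμs.ne)
      (fun s hs hμs => ?_) (aestronglyMeasurable_condExpL2 hm F)
    rw [integral_condExpL2_eq hm F hs hμs.ne]
    exact setIntegral_congr_ae (hm s hs) (hcoeF.mono fun x hx _ => hx)
  have hnormsq : ∀ (u : Lp ℝ 2 μ), ∫ x, (u : α → ℝ) x ^ 2 ∂μ = ‖u‖ ^ 2 := by
    intro u
    have h := L2.inner_def (𝕜 := ℝ) u u
    rw [real_inner_self_eq_norm_sq] at h
    rw [h]
    refine integral_congr_ae (Filter.Eventually.of_forall fun x => ?_)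
    simp only []
    rw [real_inner_self_eq_norm_sq, Real.norm_eq_abs, sq_abs]
  have e1 : ∫ x, (μ[f|m]) x ^ 2 ∂μ = ‖cF‖ ^ 2 := by
    rw [← hnormsq cF]
    exact integral_congr_ae (h1.symm.mono fun x hx => by simp only [hx])
  have e2 : ∫ x, f x ^ 2 ∂μ = ‖F‖ ^ 2 := by
    rw [← hnormsq F]
    exact integral_congr_ae (hcoeF.symm.mono fun x hx => by simp only [hx])
  rw [e1, e2]
  exact pow_le_pow_left₀ (norm_nonneg _) (norm_condExpL2_le hm F) 2



open MeasureTheory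
open scoped RealInnerProductSpace

/-- **Surrogate loss bound for the conditional mean embedding:** for every
measurable `μ : 𝒳 → G` with `E‖μ(X)‖² < ∞` and every `g` with `‖g‖ ≤ 1`,
`E[(E[⟪g, ψ(Y)⟫ | σ(X)] − ⟪g, μ(X)⟫)²] ≤ E‖ψ(Y) − μ(X)‖²`; consequently the
natural risk `sup_{‖g‖≤1} E[(E[⟪g,ψ(Y)⟫|σ(X)] − ⟪g, μ(X)⟫)²]` is bounded by the
surrogate risk `E‖ψ(Y) − μ(X)‖²`. -/
theorem conditional_mean_embedding_surrogate_bound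
    {Ω : Type*} [MeasurableSpace Ω]
    {𝒳 : Type*} [MeasurableSpace 𝒳] {𝒴 : Type*} [MeasurableSpace 𝒴]
    {G : Type*} [NormedAddCommGroup G] [InnerProductSpace ℝ G] [CompleteSpace G]
    (P : Measure Ω) [IsProbabilityMeasure P]
    (X : Ω → 𝒳) (Y : Ω → 𝒴) (hX : Measurable X) (hY : Measurable Y)
    (ψ : 𝒴 → G) (hψ : StronglyMeasurable ψ)
    (hψ2 : Integrable (fun ω => ‖ψ (Y ω)‖ ^ 2) P)
    (μ : 𝒳 → G) (hμ : StronglyMeasurable μ)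
    (hμ2 : Integrable (fun ω => ‖μ (X ω)‖ ^ 2) P) :
    (∀ g : G, ‖g‖ ≤ 1 →
        (∫ ω, ((P[(fun ω' => ⟪g, ψ (Y ω')⟫) | MeasurableSpace.comap X inferInstance]) ω
              - ⟪g, μ (X ω)⟫) ^ 2 ∂P)
          ≤ ∫ ω, ‖ψ (Y ω) - μ (X ω)‖ ^ 2 ∂P) ∧
    sSup {r : ℝ | ∃ g : G, ‖g‖ ≤ 1 ∧
          r = ∫ ω, ((P[(fun ω' => ⟪g, ψ (Y ω')⟫) | MeasurableSpace.comap X inferInstance]) ω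
                - ⟪g, μ (X ω)⟫) ^ 2 ∂P}
      ≤ ∫ ω, ‖ψ (Y ω) - μ (X ω)‖ ^ 2 ∂P := by
  have hm : MeasurableSpace.comap X inferInstance ≤ ‹MeasurableSpace Ω› := hX.comap_le
  have hψY : AEStronglyMeasurable (fun ω => ψ (Y ω)) P :=
    (hψ.comp_measurable hY).aestronglyMeasurable
  have hμX : AEStronglyMeasurable (fun ω => μ (X ω)) P :=
    (hμ.comp_measurable hX).aestronglyMeasurable
  have hψmem : MemLp (fun ω => ψ (Y ω)) 2 P :=
    (memLp_two_iff_integrable_sq_norm hψY).2 hψ2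
  have hμmem : MemLp (fun ω => μ (X ω)) 2 P :=
    (memLp_two_iff_integrable_sq_norm hμX).2 hμ2
  have hdiff : MemLp (fun ω => ψ (Y ω) - μ (X ω)) 2 P := hψmem.sub hμmem
  have hdiffsq : Integrable (fun ω => ‖ψ (Y ω) - μ (X ω)‖ ^ 2) P :=
    (memLp_two_iff_integrable_sq_norm (hψY.sub hμX)).1 hdiff
  have key : ∀ g : G, ‖g‖ ≤ 1 →
      (∫ ω, ((P[(fun ω' => ⟪g, ψ (Y ω')⟫) | MeasurableSpace.comap X inferInstance]) ω
            - ⟪g, μ (X ω)⟫) ^ 2 ∂P)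
        ≤ ∫ ω, ‖ψ (Y ω) - μ (X ω)‖ ^ 2 ∂P := by
    intro g hg
    set f : Ω → ℝ := fun ω => ⟪g, ψ (Y ω) - μ (X ω)⟫ with hfdef
    have hfsm : AEStronglyMeasurable f P :=
      ((innerSL ℝ g).continuous.comp_stronglyMeasurable
        ((hψ.comp_measurable hY).sub (hμ.comp_measurable hX))).aestronglyMeasurable
    have hfbound : ∀ ω, ‖f ω‖ ≤ ‖ψ (Y ω) - μ (X ω)‖ := fun ω => by
      calc ‖f ω‖ ≤ ‖g‖ * ‖ψ (Y ω) - μ (X ω)‖ := norm_inner_le_norm g _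
        _ ≤ 1 * ‖ψ (Y ω) - μ (X ω)‖ := by
            exact mul_le_mul_of_nonneg_right hg (norm_nonneg _)
        _ = ‖ψ (Y ω) - μ (X ω)‖ := one_mul _
    have hfmem : MemLp f 2 P :=
      hdiff.of_le hfsm (Filter.Eventually.of_forall hfbound)
    have hfsq : Integrable (fun ω => f ω ^ 2) P :=
      (memLp_two_iff_integrable_sq hfsm).1 hfmem
    -- the two inner-product components
    have h1mem : MemLp (fun ω => ⟪g, ψ (Y ω)⟫) 2 P := by
      refine hψmem.of_le (((innerSL ℝ g).continuous.comp_stronglyMeasurable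
        (hψ.comp_measurable hY)).aestronglyMeasurable)
        (Filter.Eventually.of_forall fun ω => ?_)
      calc ‖⟪g, ψ (Y ω)⟫‖ ≤ ‖g‖ * ‖ψ (Y ω)‖ := norm_inner_le_norm g _
        _ ≤ 1 * ‖ψ (Y ω)‖ := mul_le_mul_of_nonneg_right hg (norm_nonneg _)
        _ = ‖ψ (Y ω)‖ := one_mul _
    have h2sm : StronglyMeasurable[MeasurableSpace.comap X inferInstance]
        (fun ω => ⟪g, μ (X ω)⟫) := by
      have hXm : Measurable[MeasurableSpace.comap X inferInstance] X := fun s hs => ⟨s, hs, rfl⟩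
      exact (innerSL ℝ g).continuous.comp_stronglyMeasurable (hμ.comp_measurable hXm)
    have h2mem : MemLp (fun ω => ⟪g, μ (X ω)⟫) 2 P := by
      refine hμmem.of_le (((innerSL ℝ g).continuous.comp_stronglyMeasurable
        (hμ.comp_measurable hX)).aestronglyMeasurable)
        (Filter.Eventually.of_forall fun ω => ?_)
      calc ‖⟪g, μ (X ω)⟫‖ ≤ ‖g‖ * ‖μ (X ω)‖ := norm_inner_le_norm g _
        _ ≤ 1 * ‖μ (X ω)‖ := mul_le_mul_of_nonneg_right hg (norm_nonneg _)
        _ = ‖μ (X ω)‖ := one_mul _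
    have h1int : Integrable (fun ω => ⟪g, ψ (Y ω)⟫) P := h1mem.integrable one_le_two
    have h2int : Integrable (fun ω => ⟪g, μ (X ω)⟫) P := h2mem.integrable one_le_two
    -- condexp identity
    have hsub : P[f|MeasurableSpace.comap X inferInstance] =ᵐ[P]
        fun ω => (P[(fun ω' => ⟪g, ψ (Y ω')⟫)|MeasurableSpace.comap X inferInstance]) ω - ⟪g, μ (X ω)⟫ := by
      have hfeq : f = (fun ω => ⟪g, ψ (Y ω)⟫) - fun ω => ⟪g, μ (X ω)⟫ := by
        funext ω; simp [hfdef, inner_sub_right]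
      have h2ce : P[(fun ω => ⟪g, μ (X ω)⟫)|MeasurableSpace.comap X inferInstance] = fun ω => ⟪g, μ (X ω)⟫ :=
        condExp_of_stronglyMeasurable hm h2sm h2int
      calc P[f|MeasurableSpace.comap X inferInstance] =ᵐ[P] P[(fun ω => ⟪g, ψ (Y ω)⟫)|MeasurableSpace.comap X inferInstance] - P[(fun ω => ⟪g, μ (X ω)⟫)|MeasurableSpace.comap X inferInstance] := by
            rw [hfeq]; exact condExp_sub h1int h2int _
        _ = fun ω => (P[(fun ω' => ⟪g, ψ (Y ω')⟫)|MeasurableSpace.comap X inferInstance]) ω - ⟪g, μ (X ω)⟫ := by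
            rw [h2ce]; rfl
    have hLHS : (∫ ω, ((P[(fun ω' => ⟪g, ψ (Y ω')⟫)|MeasurableSpace.comap X inferInstance]) ω - ⟪g, μ (X ω)⟫) ^ 2 ∂P)
        = ∫ ω, (P[f|MeasurableSpace.comap X inferInstance]) ω ^ 2 ∂P :=
      integral_congr_ae (hsub.symm.mono fun ω hω => congrArg (fun t => t ^ 2) hω)
    rw [hLHS]
    calc ∫ ω, (P[f|MeasurableSpace.comap X inferInstance]) ω ^ 2 ∂P ≤ ∫ ω, f ω ^ 2 ∂P := integral_sq_condexp_le' hm hfmem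
      _ ≤ ∫ ω, ‖ψ (Y ω) - μ (X ω)‖ ^ 2 ∂P := by
          refine integral_mono hfsq hdiffsq fun ω => ?_
          have := hfbound ω
          calc f ω ^ 2 = ‖f ω‖ ^ 2 := by rw [Real.norm_eq_abs, sq_abs]
            _ ≤ ‖ψ (Y ω) - μ (X ω)‖ ^ 2 := by
                exact pow_le_pow_left₀ (norm_nonneg _) this 2
  refine ⟨key, ?_⟩
  refine Real.sSup_le ?_ (integral_nonneg fun ω => sq_nonneg _)
  rintro r ⟨g, hg, rfl⟩
  exact key g hg
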